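/- Let p be prime, γ ∈ ℤ^n good, and F_γ(λ) = Σ_{u ∈ U⁺_min(γ)} λ_1^{u_1}⋯λ_N^{u_N}/(u_1!⋯u_N!) ∈ 𝔽_p[λ_1,...,λ_N]. Then for every l ∈ L with Σ_{i=1}^N l_i = 0, the operator ∏_{l_i>0}(∂/∂λ_i)^{l_i} − ∏_{l_i<0}(∂/∂λ_i)^{−l_i} annihilates F_γ. -/

import Mathlib

/-- The composite operator `∏ᵢ (∂/∂λᵢ)^(e i)` applied to a multivariate
polynomial (the factors commute, so the order of composition is immaterial). -/
noncomputable def applyDiffs {N : ℕ} {F : Type*} [CommSemiring F] (e : Fin N → ℕ)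
    (f : MvPolynomial (Fin N) F) : MvPolynomial (Fin N) F :=
  (List.finRange N).foldr
    (fun i g => ((MvPolynomial.pderiv i).toLinearMap ^ e i) g) f

section AuxStmt4
open MvPolynomial Finsupp

lemma pderiv_pow_monomial {N : ℕ} {F : Type*} [CommSemiring F] (i : Fin N) (k : ℕ)
    (s : Fin N →₀ ℕ) (c : F) :
    ((MvPolynomial.pderiv i).toLinearMap ^ k) (MvPolynomial.monomial s c) =
      MvPolynomial.monomial (s - Finsupp.single i k)
        (c * (((s i).descFactorial k : ℕ) : F)) := by
  induction k with
  | zero => simp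
  | succ k ih =>
    rw [pow_succ', Module.End.mul_apply, ih]
    rw [show ((pderiv (R := F) i).toLinearMap : MvPolynomial (Fin N) F →ₗ[F] _) (monomial (s - Finsupp.single i k) (c * (((s i).descFactorial k : ℕ) : F))) = pderiv i (monomial (s - Finsupp.single i k) (c * (((s i).descFactorial k : ℕ) : F))) from rfl]
    rw [pderiv_monomial]
    rw [tsub_tsub, ← Finsupp.single_add]
    congr 1
    rw [Finsupp.tsub_apply, Finsupp.single_eq_same, Nat.descFactorial_succ]
    push_cast [Nat.descFactorial_succ]
    ring

lemma foldr_monomial {N : ℕ} {F : Type*} [CommSemiring F] (e u : Fin N → ℕ)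
    (L : List (Fin N)) (hL : L.Nodup) (c : F) :
    L.foldr (fun i g => ((MvPolynomial.pderiv i).toLinearMap ^ e i) g)
        (MvPolynomial.monomial (Finsupp.equivFunOnFinite.symm u) c) =
      MvPolynomial.monomial
        (Finsupp.equivFunOnFinite.symm (fun i => if i ∈ L then u i - e i else u i))
        (c * (((L.map fun i => (u i).descFactorial (e i)).prod : ℕ) : F)) := by
  induction L with
  | nil => simp
  | cons i t ih =>
    obtain ⟨hi, ht⟩ := List.nodup_cons.mp hL
    rw [List.foldr_cons, ih ht, pderiv_pow_monomial]
    have h1 : (Finsupp.equivFunOnFinite.symm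
        (fun j => if j ∈ t then u j - e j else u j)) i = u i := by
      simp [Finsupp.coe_equivFunOnFinite_symm, hi]
    have h2 : (Finsupp.equivFunOnFinite.symm
          (fun j => if j ∈ t then u j - e j else u j)) - Finsupp.single i (e i) =
        Finsupp.equivFunOnFinite.symm
          (fun j => if j ∈ i :: t then u j - e j else u j) := by
      ext j
      rw [Finsupp.tsub_apply]
      by_cases hj : j = i
      · subst hj
        simp [Finsupp.coe_equivFunOnFinite_symm, hi]
      · simp [Finsupp.coe_equivFunOnFinite_symm, Finsupp.single_apply, Ne.symm hj, hj]
    rw [h1, h2]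
    congr 1
    simp only [List.map_cons, List.prod_cons]
    push_cast
    ring

lemma applyDiffs_monomial {N : ℕ} {F : Type*} [CommSemiring F] (e u : Fin N → ℕ) (c : F) :
    applyDiffs e (MvPolynomial.monomial (Finsupp.equivFunOnFinite.symm u) c) =
      MvPolynomial.monomial (Finsupp.equivFunOnFinite.symm (fun i => u i - e i))
        (c * ((∏ i, (u i).descFactorial (e i) : ℕ) : F)) := by
  rw [applyDiffs, foldr_monomial e u _ (List.nodup_finRange N) c]
  have h : (fun i => if i ∈ List.finRange N then u i - e i else u i) = fun i => u i - e i := by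
    funext j; simp [List.mem_finRange]
  rw [h, Fin.prod_univ_def]

lemma applyDiffs_sum {N : ℕ} {F : Type*} [CommSemiring F] {ι : Type*} (e : Fin N → ℕ)
    (S : Finset ι) (G : ι → MvPolynomial (Fin N) F) :
    applyDiffs e (∑ u ∈ S, G u) = ∑ u ∈ S, applyDiffs e (G u) := by
  unfold applyDiffs
  induction List.finRange N with
  | nil => simp
  | cons i t ih => simp [List.foldr_cons, ih, map_sum]

lemma reduce_sum {N p : ℕ} (hp : p.Prime) (Umin : Finset (Fin N → ℕ))
    (hgood : ∀ u ∈ Umin, ∀ i, u i ≤ p - 1) (e' : Fin N → ℕ) :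
    ∑ u ∈ Umin, MvPolynomial.monomial (Finsupp.equivFunOnFinite.symm fun i => u i - e' i)
        (((∏ i, (u i).factorial : ℕ) : ZMod p)⁻¹ *
          ((∏ i, (u i).descFactorial (e' i) : ℕ) : ZMod p))
    = ∑ u ∈ Umin.filter (fun u => ∀ i, e' i ≤ u i),
        MvPolynomial.monomial (Finsupp.equivFunOnFinite.symm fun i => u i - e' i)
        (((∏ i, (u i - e' i).factorial : ℕ) : ZMod p)⁻¹) := by
  haveI := Fact.mk hp
  have hstep : ∑ u ∈ Umin, MvPolynomial.monomial
        (Finsupp.equivFunOnFinite.symm fun i => u i - e' i)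
        (((∏ i, (u i).factorial : ℕ) : ZMod p)⁻¹ *
          ((∏ i, (u i).descFactorial (e' i) : ℕ) : ZMod p))
      = ∑ u ∈ Umin.filter (fun u => ∀ i, e' i ≤ u i), MvPolynomial.monomial
        (Finsupp.equivFunOnFinite.symm fun i => u i - e' i)
        (((∏ i, (u i).factorial : ℕ) : ZMod p)⁻¹ *
          ((∏ i, (u i).descFactorial (e' i) : ℕ) : ZMod p)) := by
    refine (Finset.sum_filter_of_ne ?_).symm
    intro u _ hne
    by_contra h
    push_neg at h
    obtain ⟨i, hi⟩ := h
    apply hne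
    have hz : (∏ i, (u i).descFactorial (e' i)) = 0 :=
      Finset.prod_eq_zero (Finset.mem_univ i)
        (Nat.descFactorial_eq_zero_iff_lt.mpr (by omega))
    rw [hz]
    simp
  rw [hstep]
  apply Finset.sum_congr rfl
  intro u hu
  rw [Finset.mem_filter] at hu
  obtain ⟨huU, hle⟩ := hu
  congr 1
  have hBD : (∏ i, (u i - e' i).factorial) * (∏ i, (u i).descFactorial (e' i))
      = ∏ i, (u i).factorial := by
    rw [← Finset.prod_mul_distrib]
    exact Finset.prod_congr rfl fun i _ => Nat.factorial_mul_descFactorial (hle i)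
  have hlt : ∀ m : ℕ, m ≤ p - 1 → ((m.factorial : ℕ) : ZMod p) ≠ 0 := by
    intro m hm
    rw [Ne, ZMod.natCast_eq_zero_iff]
    intro hdvd
    have := (Nat.Prime.dvd_factorial hp).mp hdvd
    have := hp.two_le
    omega
  have hA : ((∏ i, (u i).factorial : ℕ) : ZMod p) ≠ 0 := by
    push_cast
    exact Finset.prod_ne_zero_iff.mpr fun i _ => hlt _ (hgood u huU i)
  have hB : ((∏ i, (u i - e' i).factorial : ℕ) : ZMod p) ≠ 0 := by
    push_cast
    exact Finset.prod_ne_zero_iff.mpr fun i _ =>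
      hlt _ (le_trans (Nat.sub_le _ _) (hgood u huU i))
  have hcast : ((∏ i, (u i - e' i).factorial : ℕ) : ZMod p) *
      ((∏ i, (u i).descFactorial (e' i) : ℕ) : ZMod p)
      = ((∏ i, (u i).factorial : ℕ) : ZMod p) := by
    exact_mod_cast congrArg (Nat.cast : ℕ → ZMod p) hBD
  have hD : ((∏ i, (u i).descFactorial (e' i) : ℕ) : ZMod p) ≠ 0 := by
    intro h
    rw [h, mul_zero] at hcast
    exact hA hcast.symm
  rw [← hcast, mul_inv, mul_assoc, inv_mul_cancel₀ hD, mul_one]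

end AuxStmt4

/-- For good `γ`, the polynomial `F_γ = Σ_{u ∈ U⁺_min(γ)} λ^u / ∏ uᵢ!` over
`𝔽_p` is annihilated by every box operator
`∏_{lᵢ>0}(∂/∂λᵢ)^{lᵢ} - ∏_{lᵢ<0}(∂/∂λᵢ)^{-lᵢ}` with `l ∈ L`, `Σ lᵢ = 0`. -/
theorem stmt4 {n N : ℕ} (a : Fin N → Fin n → ℤ) (p : ℕ) (hp : p.Prime)
    (γ : Fin n → ℤ)
    (Uminset : Finset (Fin N → ℕ))
    (hUminset : ∀ u : Fin N → ℕ, u ∈ Uminset ↔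
      ((∀ j, ∑ i, (u i : ℤ) * a i j = γ j) ∧
        ∀ v : Fin N → ℕ, (∀ j, ∑ i, (v i : ℤ) * a i j = γ j) →
          ∑ i, u i ≤ ∑ i, v i))
    (hgood : ∀ u ∈ Uminset, ∀ i, u i ≤ p - 1)
    (Fγ : MvPolynomial (Fin N) (ZMod p))
    (hFγ : Fγ = ∑ u ∈ Uminset,
      MvPolynomial.monomial (Finsupp.equivFunOnFinite.symm u)
        ((∏ i, (u i).factorial : ℕ) : ZMod p)⁻¹)
    (l : Fin N → ℤ) (hl : ∀ j, ∑ i, l i * a i j = 0) (hlsum : ∑ i, l i = 0) :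
    applyDiffs (fun i => (l i).toNat) Fγ =
      applyDiffs (fun i => (-l i).toNat) Fγ := by
  subst hFγ
  rw [applyDiffs_sum, applyDiffs_sum]
  simp only [applyDiffs_monomial]
  rw [reduce_sum hp Uminset hgood, reduce_sum hp Uminset hgood]
  -- the map u ↦ u - l⁺ + l⁻ between the two filtered index sets
  have key : ∀ m : Fin N → ℤ, (∀ j, ∑ i, m i * a i j = 0) → (∑ i, m i = 0) →
      ∀ u ∈ Uminset.filter (fun u => ∀ i, (m i).toNat ≤ u i),
        (fun i => u i - (m i).toNat + (-m i).toNat) ∈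
          Uminset.filter (fun u => ∀ i, (-m i).toNat ≤ u i) := by
    intro m hm hms u hu
    rw [Finset.mem_filter] at hu ⊢
    obtain ⟨huU, hle⟩ := hu
    rw [hUminset] at huU
    obtain ⟨hsum, hmin⟩ := huU
    have hv : ∀ i, ((u i - (m i).toNat + (-m i).toNat : ℕ) : ℤ) = (u i : ℤ) - m i := by
      intro i
      have := hle i
      omega
    have hvsum : ∀ j, ∑ i, ((u i - (m i).toNat + (-m i).toNat : ℕ) : ℤ) * a i j = γ j := by
      intro j
      simp only [hv]
      rw [show (∑ i, ((u i : ℤ) - m i) * a i j) =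
          (∑ i, (u i : ℤ) * a i j) - ∑ i, m i * a i j by
        rw [← Finset.sum_sub_distrib]
        exact Finset.sum_congr rfl fun i _ => by ring]
      rw [hsum j, hm j, sub_zero]
    refine ⟨(hUminset _).mpr ⟨hvsum, ?_⟩, fun i => Nat.le_add_left _ _⟩
    intro w hw
    have h1 := hmin w hw
    have h2 : ((∑ i, (u i - (m i).toNat + (-m i).toNat) : ℕ) : ℤ) = ((∑ i, u i : ℕ) : ℤ) := by
      rw [Nat.cast_sum, Nat.cast_sum, Finset.sum_congr rfl fun i _ => hv i,
        Finset.sum_sub_distrib, hms, sub_zero]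
    omega
  have hml : ∀ j, ∑ i, (-l i) * a i j = 0 := by
    intro j
    rw [show (∑ i, (-l i) * a i j) = -∑ i, l i * a i j by
      rw [← Finset.sum_neg_distrib]
      exact Finset.sum_congr rfl fun i _ => by ring]
    rw [hl j, neg_zero]
  have hmls : ∑ i, (-l i) = 0 := by
    rw [Finset.sum_neg_distrib, hlsum, neg_zero]
  refine Finset.sum_nbij' (fun u i => u i - (l i).toNat + (-l i).toNat)
    (fun v i => v i - (-l i).toNat + (l i).toNat) (key l hl hlsum) ?_ ?_ ?_ ?_
  · intro v hv
    have := key (fun i => -l i) hml hmls v (by simpa using hv)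
    simpa using this
  · intro u hu
    rw [Finset.mem_filter] at hu
    funext i
    simp only []
    have := hu.2 i
    omega
  · intro v hv
    rw [Finset.mem_filter] at hv
    funext i
    simp only []
    have := hv.2 i
    omega
  · intro u hu
    rw [Finset.mem_filter] at hu
    have heq : ∀ i, u i - (l i).toNat + (-l i).toNat - (-l i).toNat = u i - (l i).toNat :=
      fun i => by omega
    simp only [heq]
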